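/- Let (S, 𝒮, μ) be a measure space and η a random measure on S that is μ-swap-invariant under a probability measure Q. Let X be a random variable with X > 0 Q-almost surely and E_Q[X⁻¹] < ∞, and define a probability measure P by dP/dQ = 1/(X · E_Q[X⁻¹]). Then the random measure ξ = X·η is μ-swap-invariant under P. -/

import Mathlib

open MeasureTheory
open scoped ENNReal

def SwapInvariant {Ω S : Type*} [MeasurableSpace Ω] [MeasurableSpace S]
    (P : Measure Ω) (μ : Measure S) (ξ : Ω → Measure S) : Prop :=
  ∀ (n : ℕ) (u : Fin n → ℝ) (A B : Fin n → Set S),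
    (∀ i, MeasurableSet (A i)) → (∀ i, MeasurableSet (B i)) →
    Pairwise (Function.onFun Disjoint A) → Pairwise (Function.onFun Disjoint B) →
    (∀ i, μ (A i) = μ (B i)) →
    (∀ i, ∫⁻ ω, ξ ω (A i) ∂P ≠ ⊤) → (∀ i, ∫⁻ ω, ξ ω (B i) ∂P ≠ ⊤) →
    ∫ ω, |∑ i, u i * (ξ ω (A i)).toReal| ∂P =
      ∫ ω, |∑ i, u i * (ξ ω (B i)).toReal| ∂P

private lemma meas_eta_apply {Ω S : Type*} [MeasurableSpace Ω] [MeasurableSpace S]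
    (η : Ω → Measure S) (hη : Measurable η) {A : Set S} (hA : MeasurableSet A) :
    Measurable (fun ω => η ω A) :=
  (Measure.measurable_coe hA).comp hη

private lemma fin_transfer {Ω S : Type*} [MeasurableSpace Ω] [MeasurableSpace S]
    (Q : Measure Ω) (η : Ω → Measure S) (hη : Measurable η)
    (X : Ω → ℝ) (hX : Measurable X) (c : ℝ) (hc : 0 < c)
    (hXpos : ∀ᵐ ω ∂Q, 0 < X ω)
    {A : Set S} (hA : MeasurableSet A) :
    ∫⁻ ω, (ENNReal.ofReal (X ω) • η ω) A
        ∂(Q.withDensity (fun ω => ENNReal.ofReal (1 / (X ω * c)))) =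
      ENNReal.ofReal c⁻¹ * ∫⁻ ω, η ω A ∂Q := by
  have hd : Measurable (fun ω => ENNReal.ofReal (1 / (X ω * c))) :=
    (measurable_const.div (hX.mul_const c)).ennreal_ofReal
  have hg : Measurable (fun ω => (ENNReal.ofReal (X ω) • η ω) A) := by
    simp only [Measure.smul_apply, smul_eq_mul]
    exact hX.ennreal_ofReal.mul (meas_eta_apply η hη hA)
  rw [lintegral_withDensity_eq_lintegral_mul Q hd hg]
  rw [← lintegral_const_mul _ (meas_eta_apply η hη hA)]
  refine lintegral_congr_ae ?_
  filter_upwards [hXpos] with ω hω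
  simp only [Pi.mul_apply, Measure.smul_apply, smul_eq_mul, ← mul_assoc]
  congr 1
  rw [← ENNReal.ofReal_mul (by positivity)]
  congr 1
  field_simp

private lemma key_integral {Ω S : Type*} [MeasurableSpace Ω] [MeasurableSpace S]
    (Q : Measure Ω) (η : Ω → Measure S) (hη : Measurable η)
    (X : Ω → ℝ) (hX : Measurable X) (c : ℝ) (hc : 0 < c)
    (hXpos : ∀ᵐ ω ∂Q, 0 < X ω)
    (n : ℕ) (u : Fin n → ℝ) (A : Fin n → Set S) (hA : ∀ i, MeasurableSet (A i))
    (hfin : ∀ i, ∫⁻ ω, η ω (A i) ∂Q ≠ ⊤) :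
    ∫ ω, |∑ i, u i * ((ENNReal.ofReal (X ω) • η ω) (A i)).toReal|
        ∂(Q.withDensity (fun ω => ENNReal.ofReal (1 / (X ω * c)))) =
      c⁻¹ * ∫ ω, |∑ i, u i * (η ω (A i)).toReal| ∂Q := by
  have hd : Measurable (fun ω => ENNReal.ofReal (1 / (X ω * c))) :=
    (measurable_const.div (hX.mul_const c)).ennreal_ofReal
  set h : Ω → ℝ := fun ω => ∑ i, u i * (η ω (A i)).toReal with hh
  have hhm : Measurable h := by
    apply Finset.measurable_sum
    intro i _
    exact measurable_const.mul (meas_eta_apply η hη (hA i)).ennreal_toReal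
  set g : Ω → ℝ := fun ω => ∑ i, u i * ((ENNReal.ofReal (X ω) • η ω) (A i)).toReal with hg
  have hgm : Measurable g := by
    apply Finset.measurable_sum
    intro i _
    refine measurable_const.mul ?_
    simp only [Measure.smul_apply, smul_eq_mul]
    exact (hX.ennreal_ofReal.mul (meas_eta_apply η hη (hA i))).ennreal_toReal
  -- g ω = X ω * h ω a.e.
  have hgh : ∀ᵐ ω ∂Q, |g ω| = X ω * |h ω| := by
    filter_upwards [hXpos] with ω hω
    have : g ω = X ω * h ω := by
      simp only [hg, hh, Finset.mul_sum, Measure.smul_apply, smul_eq_mul,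
        ENNReal.toReal_mul, ENNReal.toReal_ofReal hω.le]
      exact Finset.sum_congr rfl (fun i _ => by ring)
    rw [this, abs_mul, abs_of_pos hω]
  have hLfin : ∫⁻ ω, ENNReal.ofReal |h ω| ∂Q ≠ ⊤ := by
    have hb : ∀ ω, ENNReal.ofReal |h ω| ≤ ∑ i, ENNReal.ofReal |u i| * η ω (A i) := by
      intro ω
      calc ENNReal.ofReal |h ω| ≤ ENNReal.ofReal (∑ i, |u i| * (η ω (A i)).toReal) := by
            apply ENNReal.ofReal_le_ofReal
            refine (Finset.abs_sum_le_sum_abs _ _).trans ?_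
            exact Finset.sum_le_sum fun i _ => by rw [abs_mul, abs_of_nonneg ENNReal.toReal_nonneg]
        _ ≤ ∑ i, ENNReal.ofReal |u i| * η ω (A i) := by
            rw [ENNReal.ofReal_sum_of_nonneg (fun i _ => by positivity)]
            refine Finset.sum_le_sum fun i _ => ?_
            rw [ENNReal.ofReal_mul (abs_nonneg _)]
            exact mul_le_mul_right (ENNReal.ofReal_toReal_le) _
    refine ne_top_of_le_ne_top ?_ (lintegral_mono hb)
    rw [lintegral_finset_sum]
    · exact ENNReal.sum_ne_top.2 fun i _ => by
        rw [lintegral_const_mul _ (meas_eta_apply η hη (hA i))]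
        exact ENNReal.mul_ne_top ENNReal.ofReal_ne_top (hfin i)
    · exact fun i _ => measurable_const.mul (meas_eta_apply η hη (hA i))
  -- convert both integrals to lintegrals
  rw [integral_eq_lintegral_of_nonneg_ae (Filter.Eventually.of_forall fun ω => abs_nonneg _)
    hgm.abs.aestronglyMeasurable]
  rw [integral_eq_lintegral_of_nonneg_ae (Filter.Eventually.of_forall fun ω => abs_nonneg _)
    hhm.abs.aestronglyMeasurable]
  rw [lintegral_withDensity_eq_lintegral_mul Q hd hgm.abs.ennreal_ofReal]
  have hkey : ∫⁻ ω, ((fun ω => ENNReal.ofReal (1 / (X ω * c))) * fun ω => ENNReal.ofReal |g ω|) ω ∂Q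
      = ENNReal.ofReal c⁻¹ * ∫⁻ ω, ENNReal.ofReal |h ω| ∂Q := by
    rw [← lintegral_const_mul _ hhm.abs.ennreal_ofReal]
    refine lintegral_congr_ae ?_
    filter_upwards [hXpos, hgh] with ω hω hgh
    simp only [Pi.mul_apply]
    rw [hgh, ← ENNReal.ofReal_mul (by positivity), ← ENNReal.ofReal_mul (by positivity)]
    congr 1
    field_simp
  rw [hkey, ENNReal.toReal_mul, ENNReal.toReal_ofReal (by positivity)]

theorem stmt_7 {Ω S : Type*} [MeasurableSpace Ω] [MeasurableSpace S]
    (Q : Measure Ω) [IsProbabilityMeasure Q] (μ : Measure S)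
    (η : Ω → Measure S) (hη : Measurable η)
    (hsw : SwapInvariant Q μ η)
    (X : Ω → ℝ) (hX : Measurable X) (hXpos : ∀ᵐ ω ∂Q, 0 < X ω)
    (hXinv : Integrable (fun ω => (X ω)⁻¹) Q)
    (P : Measure Ω)
    (hP : P = Q.withDensity
      (fun ω => ENNReal.ofReal (1 / (X ω * ∫ ω', (X ω')⁻¹ ∂Q)))) :
    SwapInvariant P μ (fun ω => ENNReal.ofReal (X ω) • η ω) := by
  set c : ℝ := ∫ ω', (X ω')⁻¹ ∂Q with hcdef
  have hc : 0 < c := by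
    rw [hcdef, integral_pos_iff_support_of_nonneg_ae
      (by filter_upwards [hXpos] with ω hω; exact (inv_pos.mpr hω).le) hXinv]
    have hs : MeasurableSet {ω | 0 < X ω} := measurableSet_lt measurable_const hX
    have h1 : Q {ω | 0 < X ω} = 1 := (prob_compl_eq_zero_iff hs).mp (ae_iff.mp hXpos)
    calc (0:ℝ≥0∞) < Q {ω | 0 < X ω} := by rw [h1]; exact zero_lt_one
      _ ≤ Q (Function.support fun ω => (X ω)⁻¹) :=
          measure_mono fun ω hω => (inv_pos.mpr hω).ne'
  intro n u A B hA hB hdA hdB hμAB hfA hfB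
  have hfinA : ∀ i, ∫⁻ ω, η ω (A i) ∂Q ≠ ⊤ := by
    intro i
    have := hfA i
    rw [hP, fin_transfer Q η hη X hX c hc hXpos (hA i)] at this
    intro hcon
    rw [hcon, ENNReal.mul_top (by simp [ENNReal.ofReal_eq_zero, not_le, inv_pos, hc])] at this
    exact this rfl
  have hfinB : ∀ i, ∫⁻ ω, η ω (B i) ∂Q ≠ ⊤ := by
    intro i
    have := hfB i
    rw [hP, fin_transfer Q η hη X hX c hc hXpos (hB i)] at this
    intro hcon
    rw [hcon, ENNReal.mul_top (by simp [ENNReal.ofReal_eq_zero, not_le, inv_pos, hc])] at this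
    exact this rfl
  rw [hP, key_integral Q η hη X hX c hc hXpos n u A hA hfinA,
    key_integral Q η hη X hX c hc hXpos n u B hB hfinB,
    hsw n u A B hA hB hdA hdB hμAB hfinA hfinB]
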